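/- Let I ⊆ R be a monomial ideal with linear quotients whose decomposition function b is regular, let m ∈ G(I) with |set(m)| = p, and let σ be a permutation of set(m) such that ch(m,set(m),σ) is nondegenerate. Then the p+1 exponent vectors v_0, v_1, …, v_p of the monomials m_0 = m and m_i = b(x_{σ_i} · m_{i−1}) (1 ≤ i ≤ p), regarded as points of ℝ^n, are affinely independent; consequently ch(m,set(m),σ) is a geometric simplex of dimension p. -/

import Mathlib

open MvPolynomial

/-- The monomial ideal generated by a set of exponent vectors. -/
noncomputable def genIdeal (K : Type*) [Field K] {n : ℕ} (ms : Set (Fin n →₀ ℕ)) :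
    Ideal (MvPolynomial (Fin n) K) :=
  Ideal.span ((fun u => MvPolynomial.monomial u (1 : K)) '' ms)

/-- The colon ideal `⟨m_1, …, m_{j-1}⟩ : m_j`. -/
noncomputable def colonJ (K : Type*) [Field K] {n k : ℕ} (m : Fin k → (Fin n →₀ ℕ))
    (j : Fin k) : Ideal (MvPolynomial (Fin n) K) :=
  Submodule.colon (genIdeal K {u | ∃ i : Fin k, i < j ∧ u = m i})
    (Ideal.span {MvPolynomial.monomial (m j) (1 : K)})

/-- `I` has linear quotients w.r.t. the ordering `m_1,…,m_k` of its generators: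
each colon ideal is generated by a subset of the variables. -/
def HasLinearQuotients (K : Type*) [Field K] {n k : ℕ}
    (m : Fin k → (Fin n →₀ ℕ)) : Prop :=
  ∀ j : Fin k, ∃ S : Set (Fin n),
    colonJ K m j = Ideal.span ((fun s => (MvPolynomial.X s : MvPolynomial (Fin n) K)) '' S)

/-- `set(m_j) = {i : x_i ∈ ⟨m_1,…,m_{j-1}⟩ : m_j}`. -/
def mset (K : Type*) [Field K] {n k : ℕ} (m : Fin k → (Fin n →₀ ℕ)) (j : Fin k) :
    Set (Fin n) :=
  {t | (MvPolynomial.X t : MvPolynomial (Fin n) K) ∈ colonJ K m j}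

/-- The `m i` are minimal monomial generators: none divides another. -/
def MinimalGens {n k : ℕ} (m : Fin k → (Fin n →₀ ℕ)) : Prop :=
  ∀ i j : Fin k, m i ≤ m j → i = j

/-- `b` is the decomposition function: for a monomial `u ∈ I`, `b u` is the smallest
index `j` with `u ∈ ⟨m_1,…,m_j⟩`. -/
def IsDecompositionFunction (K : Type*) [Field K] {n k : ℕ}
    (m : Fin k → (Fin n →₀ ℕ)) (b : (Fin n →₀ ℕ) → Fin k) : Prop :=
  ∀ u : Fin n →₀ ℕ, MvPolynomial.monomial u (1 : K) ∈ genIdeal K (Set.range m) →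
    (MvPolynomial.monomial u (1 : K) ∈ genIdeal K {v | ∃ i : Fin k, i ≤ b u ∧ v = m i}) ∧
    (∀ j : Fin k,
      MvPolynomial.monomial u (1 : K) ∈ genIdeal K {v | ∃ i : Fin k, i ≤ j ∧ v = m i} →
      b u ≤ j)

/-- The decomposition function is regular: `set(b(x_t·m)) ⊆ set(m)` for every
generator `m` and every `t ∈ set(m)`. -/
def IsRegularDecomp (K : Type*) [Field K] {n k : ℕ}
    (m : Fin k → (Fin n →₀ ℕ)) (b : (Fin n →₀ ℕ) → Fin k) : Prop :=
  ∀ j : Fin k, ∀ t ∈ mset K m j,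
    mset K m (b (m j + Finsupp.single t 1)) ⊆ mset K m j

/-- The sequence of vertex monomials `m_0 = m₀`, `m_{i+1} = b(x_{σ(i)} · m_i)` of the
simplex `ch(m, α, σ)` (here `σ` is 0-indexed: `σ 0, …, σ (p-1)` is the permutation). -/
noncomputable def chainSeq {n k : ℕ} (m : Fin k → (Fin n →₀ ℕ)) (b : (Fin n →₀ ℕ) → Fin k)
    (m0 : Fin n →₀ ℕ) (σ : ℕ → Fin n) : ℕ → (Fin n →₀ ℕ)
  | 0 => m0
  | i + 1 => m (b (chainSeq m b m0 σ i + Finsupp.single (σ i) 1))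

/-- `σ 0, …, σ (p-1)` is a permutation (an ordering) of the finite set `α`. -/
def PermOf {n : ℕ} (σ : ℕ → Fin n) (p : ℕ) (α : Finset (Fin n)) : Prop :=
  Set.InjOn σ (Set.Iio p) ∧ ∀ a : Fin n, a ∈ α ↔ ∃ i < p, σ i = a

/-- `ch(m,α,σ)` is nondegenerate: the vertex monomials `m_0, …, m_p` are pairwise
distinct. -/
def Nondeg {n k : ℕ} (m : Fin k → (Fin n →₀ ℕ)) (b : (Fin n →₀ ℕ) → Fin k)
    (m0 : Fin n →₀ ℕ) (σ : ℕ → Fin n) (p : ℕ) : Prop :=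
  Set.InjOn (chainSeq m b m0 σ) (Set.Iic p)

/-- A monomial (exponent vector) regarded as a point of `ℝⁿ`. -/
def toR {n : ℕ} (u : Fin n →₀ ℕ) : Fin n → ℝ := fun a => (u a : ℝ)

/-- The set of vertex monomials of `ch(m,α,σ)`. -/
def vertSet {n k : ℕ} (m : Fin k → (Fin n →₀ ℕ)) (b : (Fin n →₀ ℕ) → Fin k)
    (m0 : Fin n →₀ ℕ) (σ : ℕ → Fin n) (p : ℕ) : Set (Fin n →₀ ℕ) :=
  {v | ∃ i ≤ p, v = chainSeq m b m0 σ i}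

/- ===================== auxiliary lemmas ===================== -/

lemma mem_genIdeal_iff (K : Type*) [Field K] {n : ℕ} (S : Set (Fin n →₀ ℕ)) (u : Fin n →₀ ℕ) :
    MvPolynomial.monomial u (1 : K) ∈ genIdeal K S ↔ ∃ v ∈ S, v ≤ u := by
  unfold genIdeal
  rw [MvPolynomial.mem_ideal_span_monomial_image]
  classical
  simp [MvPolynomial.support_monomial]

lemma X_mul_mono (K : Type*) [Field K] {n : ℕ} (t : Fin n) (u : Fin n →₀ ℕ) :
    (X t : MvPolynomial (Fin n) K) * MvPolynomial.monomial u 1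
      = MvPolynomial.monomial (Finsupp.single t 1 + u) 1 := by
  rw [monomial_single_add, pow_one]

lemma mem_mset_iff (K : Type*) [Field K] {n k : ℕ} (m : Fin k → (Fin n →₀ ℕ)) (j : Fin k)
    (t : Fin n) :
    t ∈ mset K m j ↔ ∃ i : Fin k, i < j ∧ m i ≤ m j + Finsupp.single t 1 := by
  show (X t : MvPolynomial (Fin n) K) ∈ colonJ K m j ↔ _
  unfold colonJ
  rw [Submodule.mem_colon]
  constructor
  · intro h
    have h1 := h (MvPolynomial.monomial (m j) 1)
      (Ideal.subset_span (Set.mem_singleton _))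
    rw [smul_eq_mul, X_mul_mono] at h1
    rw [mem_genIdeal_iff] at h1
    obtain ⟨v, ⟨i, hij, rfl⟩, hle⟩ := h1
    exact ⟨i, hij, by rwa [add_comm] at hle⟩
  · rintro ⟨i, hij, hle⟩ q hq
    rw [SetLike.mem_coe, Ideal.mem_span_singleton'] at hq
    obtain ⟨a, rfl⟩ := hq
    rw [smul_eq_mul]
    have hX : (X t : MvPolynomial (Fin n) K) * MvPolynomial.monomial (m j) 1 ∈
        genIdeal K {u | ∃ i : Fin k, i < j ∧ u = m i} := by
      rw [X_mul_mono, mem_genIdeal_iff]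
      exact ⟨m i, ⟨i, hij, rfl⟩, by rwa [add_comm] at hle⟩
    have heq : (X t : MvPolynomial (Fin n) K) * (a * MvPolynomial.monomial (m j) 1)
        = a * ((X t : MvPolynomial (Fin n) K) * MvPolynomial.monomial (m j) 1) := by ring
    rw [heq]
    exact Ideal.mul_mem_left _ a hX

lemma b_div (K : Type*) [Field K] {n k : ℕ} {m : Fin k → (Fin n →₀ ℕ)}
    {b : (Fin n →₀ ℕ) → Fin k} (hb : IsDecompositionFunction K m b)
    (u : Fin n →₀ ℕ) (s0 : Fin k) (hs0 : m s0 ≤ u) :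
    m (b u) ≤ u ∧ ∀ i : Fin k, m i ≤ u → b u ≤ i := by
  have hu : MvPolynomial.monomial u (1 : K) ∈ genIdeal K (Set.range m) :=
    (mem_genIdeal_iff K _ u).2 ⟨m s0, ⟨s0, rfl⟩, hs0⟩
  obtain ⟨h1, h2⟩ := hb u hu
  have hmin' : ∀ i : Fin k, m i ≤ u → b u ≤ i := fun i hi =>
    h2 i ((mem_genIdeal_iff K _ u).2 ⟨m i, ⟨i, le_refl i, rfl⟩, hi⟩)
  rw [mem_genIdeal_iff] at h1
  obtain ⟨v, ⟨i, hibu, rfl⟩, hle⟩ := h1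
  have hieq : i = b u := le_antisymm hibu (hmin' i hle)
  exact ⟨hieq ▸ hle, hmin'⟩

/-- The index sequence of the chain of vertex monomials. -/
noncomputable def idxSeq {n k : ℕ} (m : Fin k → (Fin n →₀ ℕ)) (b : (Fin n →₀ ℕ) → Fin k)
    (j : Fin k) (σ : ℕ → Fin n) : ℕ → Fin k
  | 0 => j
  | i + 1 => b (m (idxSeq m b j σ i) + Finsupp.single (σ i) 1)

lemma chainSeq_eq_idx {n k : ℕ} (m : Fin k → (Fin n →₀ ℕ)) (b : (Fin n →₀ ℕ) → Fin k)
    (j : Fin k) (σ : ℕ → Fin n) : ∀ i, chainSeq m b (m j) σ i = m (idxSeq m b j σ i)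
  | 0 => rfl
  | i + 1 => by rw [chainSeq, chainSeq_eq_idx m b j σ i]; rfl

/-- for a nondegenerate `ch(m, set(m), σ)` with `|set(m)| = p`, the `p+1`
exponent vectors `v_0, …, v_p`, regarded as points of `ℝⁿ`, are affinely independent;
consequently `ch(m, set(m), σ)` is a geometric simplex of dimension `p`. -/
theorem stmt4 (K : Type*) [Field K] {n k : ℕ} (m : Fin k → (Fin n →₀ ℕ))
    (hmin : MinimalGens m) (hlq : HasLinearQuotients K m)
    (b : (Fin n →₀ ℕ) → Fin k) (hb : IsDecompositionFunction K m b)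
    (hreg : IsRegularDecomp K m b)
    (j : Fin k) (α : Finset (Fin n)) (hα : ∀ a : Fin n, a ∈ α ↔ a ∈ mset K m j)
    (p : ℕ) (hcard : α.card = p)
    (σ : ℕ → Fin n) (hσ : PermOf σ p α)
    (hnd : Nondeg m b (m j) σ p) :
    AffineIndependent ℝ (fun i : Fin (p + 1) => toR (chainSeq m b (m j) σ i)) ∧
    Module.finrank ℝ
        (vectorSpan ℝ (Set.range (fun i : Fin (p + 1) => toR (chainSeq m b (m j) σ i))))
      = p := by
  set s : ℕ → Fin k := idxSeq m b j σ with hs_def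
  have hVs : ∀ i, chainSeq m b (m j) σ i = m (s i) := chainSeq_eq_idx m b j σ
  have hseq : ∀ i : ℕ, s (i + 1) = b (m (s i) + Finsupp.single (σ i) 1) := fun i => rfl
  have hself : ∀ i : ℕ, m (s i) ≤ m (s i) + Finsupp.single (σ i) 1 := fun i => by
    rw [Finsupp.le_def]; intro a; simp
  -- the generator `m (s (i+1))` divides `x_{σ i}·m (s i)`
  have hdvd : ∀ i : ℕ, m (s (i + 1)) ≤ m (s i) + Finsupp.single (σ i) 1 := by
    intro i
    rw [hseq i]
    exact (b_div K hb _ (s i) (hself i)).1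
  -- minimality of b
  have hbmin : ∀ i : ℕ, ∀ r : Fin k, m r ≤ m (s i) + Finsupp.single (σ i) 1 →
      s (i + 1) ≤ r := by
    intro i r hr
    rw [hseq i]
    exact (b_div K hb _ (s i) (hself i)).2 r hr
  -- distinctness of consecutive chain elements implies σ i ∈ set(m (s i))
  have hV_ne : ∀ i : ℕ, i < p → s (i + 1) ≠ s i := by
    intro i hi h
    have heq : chainSeq m b (m j) σ (i + 1) = chainSeq m b (m j) σ i := by
      rw [hVs, hVs, h]
    have := hnd (show i + 1 ∈ Set.Iic p by simpa using hi)
      (show i ∈ Set.Iic p by simp; omega) heq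
    omega
  have hmem : ∀ i : ℕ, i < p → σ i ∈ mset K m (s i) := by
    intro i hi
    by_contra hns
    rw [mem_mset_iff] at hns
    push_neg at hns
    -- b of u must equal s i
    have h1 : s (i + 1) ≤ s i := hbmin i (s i) (hself i)
    have h2 : s i ≤ s (i + 1) := by
      by_contra hlt
      push_neg at hlt
      exact absurd (hdvd i) (hns (s (i + 1)) hlt)
    exact hV_ne i hi (le_antisymm h1 h2)
  -- regularity: set(m (s (i+1))) ⊆ set(m (s i))
  have hchain : ∀ i : ℕ, i < p → mset K m (s (i + 1)) ⊆ mset K m (s i) := by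
    intro i hi
    rw [hseq i]
    exact hreg (s i) (σ i) (hmem i hi)
  -- σ l ∈ set(m (s i)) for i ≤ l < p
  have hσin : ∀ d i : ℕ, i + d < p → σ (i + d) ∈ mset K m (s i) := by
    intro d
    induction d with
    | zero => intro i hi; simpa using hmem i (by simpa using hi)
    | succ d ih =>
      intro i hi
      have h1 : σ ((i + 1) + d) ∈ mset K m (s (i + 1)) := ih (i + 1) (by omega)
      have h2 := hchain i (by omega)
      have h3 : σ (i + (d + 1)) ∈ mset K m (s (i + 1)) := by
        rwa [show i + (d + 1) = (i + 1) + d by omega]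
      exact h2 h3
  -- Claim A: coordinates in set(m (s (i+1))) do not drop
  have hA : ∀ i : ℕ, ∀ t : Fin n, t ∈ mset K m (s (i + 1)) → t ≠ σ i →
      m (s i) t ≤ m (s (i + 1)) t := by
    intro i t ht htne
    by_contra hlt
    push_neg at hlt
    rw [mem_mset_iff] at ht
    obtain ⟨r, hr, hrle⟩ := ht
    have hle2 : m r ≤ m (s i) + Finsupp.single (σ i) 1 := by
      refine le_trans hrle ?_
      rw [Finsupp.le_def]
      intro a
      have hd := Finsupp.le_def.mp (hdvd i) a
      by_cases hat : a = t
      · subst hat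
        have e1 : ((m (s (i + 1)) + Finsupp.single a 1 : Fin n →₀ ℕ)) a = m (s (i + 1)) a + 1 := by
          rw [Finsupp.add_apply, Finsupp.single_eq_same]
        have e2 : m (s i) a ≤ ((m (s i) + Finsupp.single (σ i) 1 : Fin n →₀ ℕ)) a := by
          rw [Finsupp.add_apply]; exact Nat.le_add_right _ _
        omega
      · have e1 : ((m (s (i + 1)) + Finsupp.single t 1 : Fin n →₀ ℕ)) a = m (s (i + 1)) a := by
          rw [Finsupp.add_apply, Finsupp.single_apply, if_neg (fun h => hat h.symm), add_zero]
        omega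
    exact absurd (hbmin i r hle2) (not_le.mpr hr)
  -- the coordinate σ l jumps by exactly 1 at step l
  have hdiag : ∀ l : ℕ, l < p →
      m (s (l + 1)) (σ l) = m (s l) (σ l) + 1 := by
    intro l hl
    have h1 : m (s (l + 1)) (σ l) ≤ m (s l) (σ l) + 1 := by
      have := Finsupp.le_def.mp (hdvd l) (σ l)
      simpa using this
    have h2 : m (s l) (σ l) < m (s (l + 1)) (σ l) := by
      by_contra hle
      push_neg at hle
      have hle' : m (s (l + 1)) ≤ m (s l) := by
        rw [Finsupp.le_def]
        intro a
        have hd := Finsupp.le_def.mp (hdvd l) a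
        rw [Finsupp.add_apply, Finsupp.single_apply] at hd
        by_cases h : σ l = a
        · subst h; omega
        · rw [if_neg h, add_zero] at hd; exact hd
      exact hV_ne l hl (hmin _ _ hle')
    omega
  -- the coordinate σ l is unchanged at steps i < l
  have hstep : ∀ i l : ℕ, i < l → l < p →
      m (s (i + 1)) (σ l) = m (s i) (σ l) := by
    intro i l hil hlp
    have hne : ¬ σ i = σ l := by
      intro h
      have := hσ.1 (show i ∈ Set.Iio p by simp; omega)
        (show l ∈ Set.Iio p by simpa using hlp) h
      omega
    have h1 : m (s (i + 1)) (σ l) ≤ m (s i) (σ l) := by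
      have hd := Finsupp.le_def.mp (hdvd i) (σ l)
      rw [Finsupp.add_apply, Finsupp.single_apply, if_neg hne, add_zero] at hd
      exact hd
    have h2 : m (s i) (σ l) ≤ m (s (i + 1)) (σ l) := by
      have hmem' : σ l ∈ mset K m (s (i + 1)) := by
        have := hσin (l - (i + 1)) (i + 1) (by omega)
        rwa [show (i + 1) + (l - (i + 1)) = l by omega] at this
      exact hA i (σ l) hmem' (fun h => hne h.symm)
    omega
  -- the coordinate σ l is constant up to step l
  have hconst : ∀ i l : ℕ, i ≤ l → l < p →
      m (s i) (σ l) = m (s 0) (σ l) := by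
    intro i
    induction i with
    | zero => intro l _ _; rfl
    | succ i ih =>
      intro l hle hlp
      rw [hstep i l (by omega) hlp, ih l (by omega) hlp]
  -- main affine independence
  have hAI : AffineIndependent ℝ (fun i : Fin (p + 1) => toR (chainSeq m b (m j) σ i)) := by
    rw [affineIndependent_iff_of_fintype]
    intro w hw hws
    rw [Finset.univ.weightedVSub_eq_linear_combination hw] at hws
    have hcoord : ∀ a : Fin n,
        ∑ i : Fin (p + 1), w i * ((m (s (i : ℕ))) a : ℝ) = 0 := by
      intro a
      have := congrFun hws a
      simpa [Finset.sum_apply, toR, hVs] using this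
    have hshift : ∀ a : Fin n,
        ∑ i : Fin (p + 1), w i * (((m (s (i : ℕ))) a : ℝ) - ((m (s 0)) a : ℝ)) = 0 := by
      intro a
      have h1 := hcoord a
      have h2 : ∑ i : Fin (p + 1), w i * ((m (s 0)) a : ℝ)
          = (∑ i : Fin (p + 1), w i) * ((m (s 0)) a : ℝ) := by
        rw [Finset.sum_mul]
      calc ∑ i : Fin (p + 1), w i * (((m (s (i : ℕ))) a : ℝ) - ((m (s 0)) a : ℝ))
          = (∑ i : Fin (p + 1), w i * ((m (s (i : ℕ))) a : ℝ))
            - ∑ i : Fin (p + 1), w i * ((m (s 0)) a : ℝ) := by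
            rw [← Finset.sum_sub_distrib]
            congr 1; funext i; ring
        _ = 0 := by rw [h1, h2, hw]; ring
    have key0 : ∀ l : ℕ, l < p → (∀ i' : Fin (p + 1), l + 1 < (i' : ℕ) → w i' = 0) →
        ∀ i : Fin (p + 1), (i : ℕ) = l + 1 → w i = 0 := by
      intro l hl hbig i hi
      have h := hshift (σ l)
      have hsum : ∑ i' : Fin (p + 1),
          w i' * (((m (s (i' : ℕ))) (σ l) : ℝ) - ((m (s 0)) (σ l) : ℝ)) = w i := by
        rw [Finset.sum_eq_single i]
        · have e1 : m (s ((i : ℕ))) (σ l) = m (s 0) (σ l) + 1 := by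
            rw [hi, hdiag l hl, hconst l l le_rfl hl]
          rw [e1]
          push_cast
          ring
        · intro i' _ hne
          rcases lt_trichotomy ((i' : ℕ)) (l + 1) with h1 | h1 | h1
          · rw [hconst (i' : ℕ) l (by omega) hl]
            ring
          · exact absurd (Fin.ext (show ((i' : ℕ)) = ((i : ℕ)) by omega)) hne
          · rw [hbig i' h1]; ring
        · intro hni; exact absurd (Finset.mem_univ i) hni
      rw [hsum] at h
      exact h
    have key : ∀ q : ℕ, ∀ i : Fin (p + 1), p ≤ q + (i : ℕ) → w i = 0 := by
      intro q
      induction q with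
      | zero =>
        intro i hi
        have hilt := i.isLt
        rcases Nat.eq_zero_or_pos p with hp | hp
        · subst hp
          have hi0 : i = 0 := Fin.ext (by omega)
          have hsum : ∑ i' : Fin 1, w i' = 0 := hw
          rw [Fin.sum_univ_one] at hsum
          rw [hi0]
          exact hsum
        · obtain ⟨l, rfl⟩ : ∃ l, p = l + 1 := ⟨p - 1, by omega⟩
          exact key0 l (by omega) (fun i' h => absurd i'.isLt (by omega)) i (by omega)
      | succ q ih =>
        intro i hi
        have hilt := i.isLt
        by_cases hq : p ≤ q + (i : ℕ)
        · exact ih i hq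
        · have hpe : p = q + 1 + (i : ℕ) := by omega
          rcases Nat.eq_zero_or_pos (i : ℕ) with hi0 | hi0
          · have hi0' : i = 0 := Fin.ext (by simpa using hi0)
            have hzero : ∀ i' : Fin (p + 1), i' ≠ i → w i' = 0 := by
              intro i' hne
              have : (i' : ℕ) ≠ 0 := fun h => hne (Fin.ext (by omega))
              exact ih i' (by omega)
            have hsum : ∑ i' : Fin (p + 1), w i' = w i :=
              Finset.sum_eq_single i (fun i' _ hne => hzero i' hne)
                (fun hni => absurd (Finset.mem_univ i) hni)
            exact hsum.symm.trans hw
          · obtain ⟨l, hl⟩ : ∃ l, (i : ℕ) = l + 1 := ⟨(i : ℕ) - 1, by omega⟩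
            exact key0 l (by omega) (fun i' h => ih i' (by omega)) i hl
    intro i
    exact key p i (by omega)
  refine ⟨hAI, hAI.finrank_vectorSpan ?_⟩
  simp
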